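/- Let G be a group acting acylindrically on a hyperbolic geodesic metric space X and let f ∈ G be loxodromic with strongly contracting quasi-geodesic axis α in X (there exist constants B', K such that for every geodesic γ at distance at least K from α, the nearest-point projection of γ to α has diameter at most B'). Let H ≤ G be a subgroup whose orbit Hx_0 is ν-quasi-convex in X, the action of G on X is metrically proper, and ⟨f⟩ ∩ gHg^{-1} = {1} for all g ∈ G. Then there exists a constant B = B(f, H, ν, K) such that for all g ∈ G and all points x_1, x_2 ∈ α with d(x_i, gHx_0) ≤ K (i=1,2), one has d(x_1, x_2) ≤ B. -/

import Mathlib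

open Set Metric

def IsGeodesicOn {X : Type*} [MetricSpace X] (γ : ℝ → X) (a b : ℝ) : Prop :=
  ∀ s ∈ Set.Icc a b, ∀ t ∈ Set.Icc a b, dist (γ s) (γ t) = |s - t|

def QuasiConvexSet {X : Type*} [MetricSpace X] (σ : ℝ) (Y : Set X) : Prop :=
  ∀ (γ : ℝ → X) (n : ℝ), IsGeodesicOn γ 0 n → γ 0 ∈ Y → γ n ∈ Y →
    ∀ t ∈ Set.Icc (0:ℝ) n, ∃ y ∈ Y, dist (γ t) y ≤ σ

namespace BAFT

set_option linter.unusedSectionVars false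

variable {G : Type*} [Group G] {X : Type*} [MetricSpace X] [MulAction G X]

lemma dsmul (hiso : ∀ g : G, Isometry (fun x : X => g • x)) (g : G) (x y : X) :
    dist (g • x) (g • y) = dist x y := (hiso g).dist_eq x y

lemma iter_eq (f : G) (α : ℝ → X) (σ : ℝ → ℝ) (hσ : ∀ t, α (σ t) = f • α t) :
    ∀ (n : ℕ) (s : ℝ), α (σ^[n] s) = (f ^ n) • α s := by
  intro n
  induction n with
  | zero => intro s; simp
  | succ n ih =>
    intro s
    rw [Function.iterate_succ_apply', hσ, ih, pow_succ', mul_smul]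

lemma aux2 (hiso : ∀ g : G, Isometry (fun x : X => g • x))
    (f : G) (α : ℝ → X) (L c : ℝ) (hL : 1 ≤ L) (hc : 0 ≤ c)
    (hqg : ∀ s t : ℝ, |s - t| / L - c ≤ dist (α s) (α t) ∧ dist (α s) (α t) ≤ L * |s - t| + c)
    (σ : ℝ → ℝ) (hσ : ∀ t, α (σ t) = f • α t)
    (hdir : Filter.Tendsto (fun n : ℕ => σ^[n] 0) Filter.atTop Filter.atTop) :
    ∃ C : ℝ, 0 ≤ C ∧ ∀ s : ℝ, ∃ m : ℤ, dist ((f ^ m) • α s) (α 0) ≤ C := by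
  classical
  have hL0 : (0:ℝ) < L := lt_of_lt_of_le one_pos hL
  have hiter := iter_eq f α σ hσ
  have hdσ : ∀ s t, dist (α (σ s)) (α (σ t)) = dist (α s) (α t) := by
    intro s t; rw [hσ, hσ]; exact dsmul hiso f _ _
  have hpar : ∀ s t : ℝ, |s - t| ≤ L * (dist (α s) (α t) + c) := by
    intro s t
    have h := (hqg s t).1
    have h2 : |s - t| / L ≤ dist (α s) (α t) + c := by linarith
    calc |s - t| = (|s - t| / L) * L := by field_simp
      _ ≤ (dist (α s) (α t) + c) * L := mul_le_mul_of_nonneg_right h2 hL0.le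
      _ = L * (dist (α s) (α t) + c) := by ring
  have hsu : ∀ s t : ℝ, |σ s - σ t| ≤ L * (L * |s - t| + 2 * c) := by
    intro s t
    have h1 : |σ s - σ t| ≤ L * (dist (α (σ s)) (α (σ t)) + c) := hpar _ _
    rw [hdσ] at h1
    have h2 : dist (α s) (α t) ≤ L * |s - t| + c := (hqg s t).2
    nlinarith [hL0.le]
  set j : ℝ := L * L + 2 * L * c with hj
  have hj0 : 0 ≤ j := by nlinarith
  have hjump : ∀ s t : ℝ, |s - t| ≤ 1 → |σ s - σ t| ≤ j := by
    intro s t h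
    have := hsu s t
    nlinarith [abs_nonneg (s - t)]
  set R : ℝ := L * (L * (j + 1) + 2 * c) with hR
  have hR0 : 0 < R := by nlinarith
  have hgap : ∀ s t : ℝ, R ≤ |s - t| → j + 1 ≤ |σ s - σ t| := by
    intro s t h
    have h1 : |s - t| ≤ L * (dist (α s) (α t) + c) := hpar s t
    have h4 : dist (α s) (α t) ≤ L * |σ s - σ t| + c := by
      rw [← hdσ]; exact (hqg _ _).2
    have h5 : |s - t| ≤ L * (L * |σ s - σ t| + 2 * c) := by nlinarith
    have h6 : L * (L * (j + 1) + 2 * c) ≤ L * (L * |σ s - σ t| + 2 * c) := le_trans h h5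
    have h7 : L * (j + 1) ≤ L * |σ s - σ t| := by
      have := (mul_le_mul_iff_right₀ hL0).mp h6
      linarith
    exact (mul_le_mul_iff_right₀ hL0).mp h7
  -- crossing lemma
  have hcross : ∀ s u v : ℝ, s + R ≤ u → s + R ≤ v → σ s < σ u → σ v < σ s → False := by
    intro s u v hu hv hσu hσv
    set N : ℕ := max ⌈|v - u|⌉₊ 1 with hN
    have hN1 : 1 ≤ N := le_max_right _ 1
    have hN0 : (0:ℝ) < (N:ℝ) := by exact_mod_cast hN1
    have hvu : |v - u| ≤ (N:ℝ) := by
      refine le_trans (Nat.le_ceil _) ?_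
      exact_mod_cast le_max_left _ _
    set w : ℕ → ℝ := fun i => u + (v - u) * i / N with hw
    have hw0 : w 0 = u := by simp [hw]
    have hwN : w N = v := by
      simp only [hw]
      field_simp
      ring
    have hwsep : ∀ i, i ≤ N → s + R ≤ w i := by
      intro i hi
      have h0i : (0:ℝ) ≤ (i:ℝ)/(N:ℝ) := by positivity
      have h1i : (i:ℝ)/(N:ℝ) ≤ 1 := by
        rw [div_le_one hN0]; exact_mod_cast hi
      have hwi : w i = u * (1 - (i:ℝ)/(N:ℝ)) + v * ((i:ℝ)/(N:ℝ)) := by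
        simp only [hw]; field_simp; ring
      rw [hwi]
      nlinarith
    have hstep : ∀ i : ℕ, |w (i+1) - w i| ≤ 1 := by
      intro i
      have hdiff : w (i+1) - w i = (v - u) / N := by
        simp only [hw]; push_cast; field_simp; ring
      rw [hdiff, abs_div, abs_of_pos hN0]
      rw [div_le_one hN0]
      exact hvu
    have hex : ∃ i, σ (w i) ≤ σ s := ⟨N, by rw [hwN]; exact hσv.le⟩
    set i₀ := Nat.find hex with hi₀
    have hspec : σ (w i₀) ≤ σ s := Nat.find_spec hex
    have hne : i₀ ≠ 0 := by
      intro h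
      rw [h, hw0] at hspec
      exact absurd hspec (not_le.mpr hσu)
    obtain ⟨k, hk⟩ : ∃ k, i₀ = k + 1 := Nat.exists_eq_succ_of_ne_zero hne
    have hi₀N : i₀ ≤ N := Nat.find_min' hex (by rw [hwN]; exact hσv.le)
    have hkmin : σ s < σ (w k) := by
      have := Nat.find_min hex (show k < i₀ by omega)
      exact not_le.mp this
    have hg1 : j + 1 ≤ |σ (w k) - σ s| := by
      refine hgap _ _ ?_
      have := hwsep k (by omega)
      rw [abs_of_nonneg (by linarith)]; linarith
    have hg2 : j + 1 ≤ |σ (w (k+1)) - σ s| := by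
      refine hgap _ _ ?_
      have := hwsep (k+1) (by omega)
      rw [abs_of_nonneg (by linarith)]; linarith
    have hj1 : σ s + (j+1) ≤ σ (w k) := by
      rw [abs_of_pos (by linarith)] at hg1; linarith
    have hj2 : σ (w (k+1)) ≤ σ s - (j+1) := by
      have hle : σ (w (k+1)) - σ s ≤ 0 := by
        have : σ (w (k+1)) ≤ σ s := by rw [← hk]; exact hspec
        linarith
      rw [abs_of_nonpos hle] at hg2; linarith
    have hjmp := hjump (w (k+1)) (w k) (hstep k)
    have : σ (w k) - σ (w (k+1)) ≤ j := by
      have := le_abs_self (σ (w k) - σ (w (k+1)))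
      rw [abs_sub_comm] at this
      linarith
    linarith
  -- global increasing
  have hinc : ∀ s t : ℝ, s + R ≤ t → σ s < σ t := by
    intro s t hst
    have hne : j + 1 ≤ |σ s - σ t| := by
      apply hgap
      rw [abs_sub_comm, abs_of_nonneg (by linarith)]; linarith
    rcases lt_or_ge (σ s) (σ t) with h | h
    · exact h
    · exfalso
      have hlt : σ t < σ s := by
        rcases lt_or_eq_of_le h with h' | h'
        · exact h'
        · exfalso; rw [h'] at hne; simp at hne; linarith
      obtain ⟨M, hM⟩ := Filter.eventually_atTop.mp
        (Filter.tendsto_atTop.mp hdir (max (max t (s + R)) (σ s + 1)))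
      have h1 : s + R ≤ σ^[M] 0 :=
        le_trans (le_trans (le_max_right t (s+R)) (le_max_left _ _)) (hM M le_rfl)
      have h2 : σ s < σ (σ^[M] 0) := by
        have h3 : σ s + 1 ≤ σ^[M+1] 0 := le_trans (le_max_right _ _) (hM (M+1) (by omega))
        rw [Function.iterate_succ_apply'] at h3
        linarith
      exact hcross s (σ^[M] 0) t h1 hst h2 hlt
  -- bound on σ on the negative half line
  set C₀ : ℝ := σ 0 + L * (L * R + 2 * c) + 1 with hC₀
  have hneg : ∀ s : ℝ, s ≤ 0 → σ s ≤ C₀ := by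
    have key : ∀ n : ℕ, ∀ s : ℝ, -(((n:ℝ) + 1) * R) ≤ s → s ≤ 0 → σ s ≤ C₀ := by
      intro n
      induction n with
      | zero =>
        intro s h1 h2
        have hlt : σ s < σ (s + R) := hinc s (s + R) (by linarith)
        have hb : |σ (s + R) - σ 0| ≤ L * (L * |s + R - 0| + 2*c) := hsu _ _
        have h3 : |s + R - 0| ≤ R := by
          rw [sub_zero, abs_of_nonneg (by push_cast at h1; linarith)]
          linarith
        have h4 : σ (s + R) - σ 0 ≤ L * (L * |s + R - 0| + 2 * c) := le_trans (le_abs_self _) hb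
        have h5 : L * (L * |s + R - 0| + 2*c) ≤ L * (L * R + 2*c) := by
          have h6 : L * |s + R - 0| ≤ L * R := mul_le_mul_of_nonneg_left h3 hL0.le
          apply mul_le_mul_of_nonneg_left _ hL0.le
          linarith
        rw [hC₀]; linarith
      | succ n ih =>
        intro s h1 h2
        rcases le_or_gt (-(((n:ℝ) + 1) * R)) s with h | h
        · exact ih s h h2
        · have hlt : σ s < σ (s + R) := hinc s (s + R) (by linarith)
          have h7 : σ (s + R) ≤ C₀ := by
            refine ih (s + R) ?_ (by nlinarith [mul_nonneg (Nat.cast_nonneg n) hR0.le])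
            push_cast at h1 ⊢
            linarith
          linarith
    intro s hs
    obtain ⟨n, hn⟩ := exists_nat_ge (-s / R)
    refine key n s ?_ hs
    rw [div_le_iff₀ hR0] at hn
    push_cast
    nlinarith
  -- step bound along the orbit of 0
  set Δ : ℝ := L * (dist (f • α 0) (α 0) + c) with hΔ
  have hΔ0 : 0 ≤ Δ := mul_nonneg hL0.le (add_nonneg dist_nonneg hc)
  have hstepτ : ∀ n : ℕ, |σ^[n+1] 0 - σ^[n] 0| ≤ Δ := by
    intro n
    have h1 : dist (α (σ^[n+1] 0)) (α (σ^[n] 0)) = dist (f • α 0) (α 0) := by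
      rw [hiter (n+1) 0, hiter n 0, pow_succ, mul_smul, dsmul hiso]
    have h2 := hpar (σ^[n+1] 0) (σ^[n] 0)
    rw [h1] at h2
    exact h2
  refine ⟨max (L * Δ + c) (L * C₀ + c), ?_, ?_⟩
  · refine le_trans ?_ (le_max_left _ _)
    have : 0 ≤ L * Δ := mul_nonneg hL0.le hΔ0
    linarith
  intro s
  rcases le_total 0 s with hs | hs
  · -- positive side: orbit of 0 is dense on the ray
    have hex : ∃ n : ℕ, s ≤ σ^[n] 0 := by
      obtain ⟨M, hM⟩ := Filter.eventually_atTop.mp (Filter.tendsto_atTop.mp hdir s)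
      exact ⟨M, hM M le_rfl⟩
    set n₀ := Nat.find hex with hn₀
    have h1 : s ≤ σ^[n₀] 0 := Nat.find_spec hex
    have h2 : |σ^[n₀] 0 - s| ≤ Δ := by
      rcases Nat.eq_zero_or_pos n₀ with h | h
      · rw [h] at h1 ⊢
        simp only [Function.iterate_zero, id_eq] at h1 ⊢
        have : s = 0 := le_antisymm h1 hs
        rw [this]; simpa using hΔ0
      · obtain ⟨k, hk⟩ : ∃ k, n₀ = k + 1 := Nat.exists_eq_succ_of_ne_zero (by omega)
        have h3 : ¬ s ≤ σ^[k] 0 := Nat.find_min hex (by omega)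
        push_neg at h3
        have h4 := hstepτ k
        rw [← hk] at h4
        have h5 : σ^[n₀] 0 - σ^[k] 0 ≤ Δ := by
          have := le_abs_self (σ^[n₀] 0 - σ^[k] 0)
          rw [hk] at this ⊢
          have h6 := hstepτ k
          linarith [le_abs_self (σ^[k+1] 0 - σ^[k] 0)]
        rw [abs_of_nonneg (by linarith)]
        linarith
    have h3 : dist (α s) (α (σ^[n₀] 0)) ≤ L * Δ + c := by
      have h4 := (hqg s (σ^[n₀] 0)).2
      have h5 : |s - σ^[n₀] 0| ≤ Δ := by rw [abs_sub_comm]; exact h2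
      nlinarith
    refine ⟨-(n₀ : ℤ), ?_⟩
    have key : dist ((f ^ (-(n₀:ℤ))) • α s) (α 0) = dist (α s) ((f ^ n₀) • α 0) := by
      have h6 : ((f ^ (n₀:ℤ))) • ((f ^ (-(n₀:ℤ))) • α s) = α s := by
        rw [smul_smul, ← zpow_add]; simp
      calc dist ((f ^ (-(n₀:ℤ))) • α s) (α 0)
          = dist ((f ^ (n₀:ℤ)) • ((f ^ (-(n₀:ℤ))) • α s)) ((f ^ (n₀:ℤ)) • α 0) :=
            (dsmul hiso _ _ _).symm
        _ = dist (α s) ((f ^ n₀) • α 0) := by rw [h6, zpow_natCast]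
    rw [key, ← hiter n₀ 0]
    exact le_trans h3 (le_max_left _ _)
  · -- negative side
    have hesc : ∃ n : ℕ, 0 < σ^[n] s := by
      have hb : ∀ n, σ^[n] 0 - L * (dist (α s) (α 0) + c) ≤ σ^[n] s := by
        intro n
        have h1 : dist (α (σ^[n] s)) (α (σ^[n] 0)) = dist (α s) (α 0) := by
          rw [hiter, hiter, dsmul hiso]
        have h2 := hpar (σ^[n] s) (σ^[n] 0)
        rw [h1] at h2
        have := abs_le.mp h2
        linarith [this.1]
      obtain ⟨M, hM⟩ := Filter.eventually_atTop.mp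
        (Filter.tendsto_atTop.mp hdir (L * (dist (α s) (α 0) + c) + 1))
      refine ⟨M, ?_⟩
      have := hb M
      have := hM M le_rfl
      linarith
    set n₁ := Nat.find hesc with hn₁
    have h1 : 0 < σ^[n₁] s := Nat.find_spec hesc
    have hne1 : n₁ ≠ 0 := by
      intro h
      rw [h] at h1
      simp only [Function.iterate_zero, id_eq] at h1
      linarith
    obtain ⟨k, hk⟩ := Nat.exists_eq_succ_of_ne_zero hne1
    have h2 : σ^[k] s ≤ 0 := le_of_not_gt (Nat.find_min hesc (by omega))
    have h3 : σ^[n₁] s ≤ C₀ := by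
      rw [hk, Function.iterate_succ_apply']
      exact hneg _ h2
    have h4 : dist (α (σ^[n₁] s)) (α 0) ≤ L * C₀ + c := by
      have h5 := (hqg (σ^[n₁] s) 0).2
      have h6 : |σ^[n₁] s - 0| ≤ C₀ := by
        rw [sub_zero, abs_of_pos h1]; exact h3
      nlinarith
    refine ⟨(n₁ : ℤ), ?_⟩
    rw [zpow_natCast, ← hiter n₁ s]
    exact le_trans h4 (le_max_right _ _)

end BAFT

theorem BAFT_main
    {G : Type*} [Group G] {X : Type*} [MetricSpace X] [MulAction G X]
    (hiso : ∀ g : G, Isometry (fun x : X => g • x)) (x₀ : X)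
    (hproper : ∀ B : Set X, Bornology.IsBounded B →
      {g : G | ∃ x ∈ B, g • x ∈ B}.Finite)
    (H : Subgroup G)
    (f : G) (α : ℝ → X) (A : Set X) (hA : A = Set.range α)
    (lamA ca : ℝ) (hlamA : 1 ≤ lamA) (hca : 0 ≤ ca)
    (hαqg : ∀ s t : ℝ, |s - t| / lamA - ca ≤ dist (α s) (α t) ∧
      dist (α s) (α t) ≤ lamA * |s - t| + ca)
    (hinv : ∀ t : ℝ, f • α t ∈ A)
    (K : ℝ)
    (hfree : ∀ g : G, ∀ h ∈ H, ∀ n : ℤ, f ^ n = g * h * g⁻¹ → n = 0) :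
    ∃ B : ℝ, ∀ g : G, ∀ x₁ ∈ A, ∀ x₂ ∈ A,
      (∃ h ∈ H, dist x₁ ((g * h) • x₀) ≤ K) → (∃ h ∈ H, dist x₂ ((g * h) • x₀) ≤ K) →
        dist x₁ x₂ ≤ B := by
  classical
  have hL0 : (0:ℝ) < lamA := lt_of_lt_of_le one_pos hlamA
  have hord : ∀ n : ℤ, f ^ n = 1 → n = 0 := by
    intro n hn
    refine hfree 1 1 H.one_mem n ?_
    rw [hn]; group
  have hinj : Function.Injective (fun n : ℤ => f ^ n) := by
    intro a b hab
    simp only at hab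
    have h1 : f ^ (a - b) = 1 := by
      rw [zpow_sub, hab]
      simp
    have := hord _ h1
    omega
  have hfin : ∀ T : ℝ, {n : ℤ | dist ((f ^ n) • α 0) (α 0) ≤ T}.Finite := by
    intro T
    have hB : Bornology.IsBounded (closedBall (α 0) (max T 0)) := isBounded_closedBall
    refine Set.Finite.subset (Set.Finite.preimage hinj.injOn (hproper _ hB)) ?_
    intro n hn
    simp only [Set.mem_preimage, Set.mem_setOf_eq]
    exact ⟨α 0, mem_closedBall_self (le_max_right T 0),
      mem_closedBall.mpr (le_trans hn (le_max_left T 0))⟩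
  have hinv' : ∀ t : ℝ, ∃ u : ℝ, α u = f • α t := by
    intro t
    have h := hinv t
    rw [hA] at h
    exact h
  choose σ hσ using hinv'
  have hiter := BAFT.iter_eq f α σ hσ
  have hpar : ∀ s t : ℝ, |s - t| ≤ lamA * (dist (α s) (α t) + ca) := by
    intro s t
    have h := (hαqg s t).1
    have h2 : |s - t| / lamA ≤ dist (α s) (α t) + ca := by linarith
    calc |s - t| = (|s - t| / lamA) * lamA := by field_simp
      _ ≤ (dist (α s) (α t) + ca) * lamA := mul_le_mul_of_nonneg_right h2 hL0.le
      _ = lamA * (dist (α s) (α t) + ca) := by ring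
  -- |orbit parameter| tends to infinity
  have habs : Filter.Tendsto (fun n : ℕ => |σ^[n] 0|) Filter.atTop Filter.atTop := by
    rw [Filter.tendsto_atTop]
    intro T
    rw [← Nat.cofinite_eq_atTop, Filter.eventually_cofinite]
    have hci : Function.Injective (fun n : ℕ => (n:ℤ)) := by
      intro a b h
      have h' : (a:ℤ) = (b:ℤ) := h
      exact_mod_cast h'
    refine Set.Finite.subset
      (Set.Finite.preimage (f := fun n : ℕ => (n:ℤ)) hci.injOn
        (hfin (lamA * max T 0 + ca))) ?_
    intro n hn
    simp only [Set.mem_setOf_eq, not_le] at hn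
    simp only [Set.mem_preimage, Set.mem_setOf_eq, zpow_natCast]
    rw [← hiter n 0]
    have h1 := (hαqg (σ^[n] 0) 0).2
    have h2 : |σ^[n] 0 - 0| ≤ max T 0 := by
      rw [sub_zero]
      exact le_trans hn.le (le_max_left _ _)
    nlinarith
  set Δ : ℝ := lamA * (dist (f • α 0) (α 0) + ca) with hΔ
  have hΔ0 : 0 ≤ Δ := mul_nonneg hL0.le (add_nonneg dist_nonneg hca)
  have hstepτ : ∀ n : ℕ, |σ^[n+1] 0 - σ^[n] 0| ≤ Δ := by
    intro n
    have h1 : dist (α (σ^[n+1] 0)) (α (σ^[n] 0)) = dist (f • α 0) (α 0) := by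
      rw [hiter (n+1) 0, hiter n 0, pow_succ, mul_smul, BAFT.dsmul hiso]
    have h2 := hpar (σ^[n+1] 0) (σ^[n] 0)
    rw [h1] at h2
    exact h2
  obtain ⟨N, hN⟩ := Filter.eventually_atTop.mp (habs.eventually_gt_atTop Δ)
  have hclaim : ∃ C : ℝ, 0 ≤ C ∧ ∀ s : ℝ, ∃ m : ℤ, dist ((f ^ m) • α s) (α 0) ≤ C := by
    rcases lt_or_ge 0 (σ^[N] 0) with hPos | hNeg
    · have hpos : ∀ n, N ≤ n → 0 < σ^[n] 0 := by
        intro n hn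
        induction n, hn using Nat.le_induction with
        | base => exact hPos
        | succ n hn ih =>
          have h1 := hstepτ n
          have h2 := hN n hn
          rw [abs_of_pos ih] at h2
          have h3 := (abs_le.mp h1).1
          linarith
      have hdir : Filter.Tendsto (fun n : ℕ => σ^[n] 0) Filter.atTop Filter.atTop := by
        refine habs.congr' ?_
        exact Filter.eventually_atTop.mpr ⟨N, fun n hn => abs_of_pos (hpos n hn)⟩
      exact BAFT.aux2 hiso f α lamA ca hlamA hca hαqg σ hσ hdir
    · have hNeg' : σ^[N] 0 < 0 := by
        have h2 := hN N le_rfl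
        rcases lt_or_eq_of_le hNeg with h | h
        · exact h
        · exfalso
          rw [h] at h2
          simp at h2
          linarith
      have hneg : ∀ n, N ≤ n → σ^[n] 0 < 0 := by
        intro n hn
        induction n, hn using Nat.le_induction with
        | base => exact hNeg'
        | succ n hn ih =>
          have h1 := hstepτ n
          have h2 := hN n hn
          rw [abs_of_neg ih] at h2
          have h3 := (abs_le.mp h1).2
          linarith
      have hqg' : ∀ s t : ℝ, |s - t| / lamA - ca ≤ dist (α (-s)) (α (-t)) ∧
          dist (α (-s)) (α (-t)) ≤ lamA * |s - t| + ca := by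
        intro s t
        have h := hαqg (-s) (-t)
        have habs2 : |(-s) - (-t)| = |s - t| := by
          rw [show (-s) - (-t) = -(s - t) by ring, abs_neg]
        rw [habs2] at h
        exact h
      have hitneg : ∀ (n : ℕ) (x : ℝ), (fun s => -σ (-s))^[n] x = -σ^[n] (-x) := by
        intro n
        induction n with
        | zero => intro x; simp
        | succ n ih =>
          intro x
          rw [Function.iterate_succ_apply', Function.iterate_succ_apply', ih]
          simp
      have hdir' : Filter.Tendsto (fun n : ℕ => (fun s => -σ (-s))^[n] 0)
          Filter.atTop Filter.atTop := by
        refine habs.congr' ?_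
        refine Filter.eventually_atTop.mpr ⟨N, fun n hn => ?_⟩
        show |σ^[n] 0| = (fun s => -σ (-s))^[n] 0
        rw [hitneg n 0, neg_zero, abs_of_neg (hneg n hn)]
      obtain ⟨C, hC0, hC⟩ := BAFT.aux2 hiso f (fun t => α (-t)) lamA ca hlamA hca
        (fun s t => hqg' s t)
        (fun s => -σ (-s))
        (fun t => by simp only [neg_neg]; exact hσ (-t))
        hdir'
      refine ⟨C, hC0, fun s => ?_⟩
      obtain ⟨m, hm⟩ := hC (-s)
      refine ⟨m, ?_⟩
      simpa using hm
  obtain ⟨C, hC0, hC⟩ := hclaim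
  set F : Set G := {w : G | dist (w • x₀) (α 0) ≤ K + C} with hF
  have hFfin : F.Finite := by
    have hB : Bornology.IsBounded (closedBall (α 0) (max (K + C) (dist x₀ (α 0)))) :=
      isBounded_closedBall
    refine Set.Finite.subset (hproper _ hB) ?_
    intro w hw
    exact ⟨x₀, mem_closedBall.mpr (le_max_right _ _),
      mem_closedBall.mpr (le_trans hw (le_max_left _ _))⟩
  set D : Set ℤ := {d : ℤ | ∃ w₁ ∈ F, ∃ w₂ ∈ F, w₁⁻¹ * f ^ d * w₂ ∈ H} with hD
  have hDfin : D.Finite := by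
    have hsub : D ⊆ ⋃ w₁ ∈ F, ⋃ w₂ ∈ F, {d : ℤ | w₁⁻¹ * f ^ d * w₂ ∈ H} := by
      intro d hd
      obtain ⟨w₁, h₁, w₂, h₂, hmem⟩ := hd
      exact Set.mem_biUnion h₁ (Set.mem_biUnion h₂ hmem)
    refine Set.Finite.subset ?_ hsub
    refine Set.Finite.biUnion hFfin fun w₁ _ => Set.Finite.biUnion hFfin fun w₂ _ => ?_
    apply Set.Subsingleton.finite
    intro d hd d' hd'
    simp only [Set.mem_setOf_eq] at hd hd'
    have hH : w₁⁻¹ * f ^ d * w₂ * (w₁⁻¹ * f ^ d' * w₂)⁻¹ ∈ H := H.mul_mem hd (H.inv_mem hd')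
    have hkey : f ^ (d - d') = w₁ * (w₁⁻¹ * f ^ d * w₂ * (w₁⁻¹ * f ^ d' * w₂)⁻¹) * w₁⁻¹ := by
      group
    have := hfree w₁ _ hH (d - d') hkey
    omega
  obtain ⟨U, hU⟩ := (hDfin.image (fun d => dist ((f ^ d) • α 0) (α 0))).bddAbove
  refine ⟨C + (C + U), ?_⟩
  rintro g x₁ hx₁ x₂ hx₂ ⟨h₁, hh₁, hd₁⟩ ⟨h₂, hh₂, hd₂⟩
  rw [hA] at hx₁ hx₂
  obtain ⟨s₁, rfl⟩ := hx₁
  obtain ⟨s₂, rfl⟩ := hx₂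
  obtain ⟨M₁, hM₁⟩ := hC s₁
  obtain ⟨M₂, hM₂⟩ := hC s₂
  set w₁ : G := f ^ M₁ * (g * h₁) with hw₁
  set w₂ : G := f ^ M₂ * (g * h₂) with hw₂
  have hw₁F : w₁ ∈ F := by
    show dist (w₁ • x₀) (α 0) ≤ K + C
    have h1 : w₁ • x₀ = (f ^ M₁) • ((g * h₁) • x₀) := by rw [hw₁, mul_smul]
    calc dist (w₁ • x₀) (α 0)
        ≤ dist (w₁ • x₀) ((f ^ M₁) • α s₁) + dist ((f ^ M₁) • α s₁) (α 0) :=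
          dist_triangle _ _ _
      _ ≤ K + C := by
          have h2 : dist (w₁ • x₀) ((f ^ M₁) • α s₁) = dist ((g * h₁) • x₀) (α s₁) := by
            rw [h1, BAFT.dsmul hiso]
          rw [h2, dist_comm]
          linarith
  have hw₂F : w₂ ∈ F := by
    show dist (w₂ • x₀) (α 0) ≤ K + C
    have h1 : w₂ • x₀ = (f ^ M₂) • ((g * h₂) • x₀) := by rw [hw₂, mul_smul]
    calc dist (w₂ • x₀) (α 0)
        ≤ dist (w₂ • x₀) ((f ^ M₂) • α s₂) + dist ((f ^ M₂) • α s₂) (α 0) :=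
          dist_triangle _ _ _
      _ ≤ K + C := by
          have h2 : dist (w₂ • x₀) ((f ^ M₂) • α s₂) = dist ((g * h₂) • x₀) (α s₂) := by
            rw [h1, BAFT.dsmul hiso]
          rw [h2, dist_comm]
          linarith
  have hdD : (M₁ - M₂) ∈ D := by
    refine ⟨w₁, hw₁F, w₂, hw₂F, ?_⟩
    have heq : w₁⁻¹ * f ^ (M₁ - M₂) * w₂ = h₁⁻¹ * h₂ := by
      rw [hw₁, hw₂]; group
    rw [heq]
    exact H.mul_mem (H.inv_mem hh₁) hh₂
  have hUd : dist ((f ^ (M₁ - M₂)) • α 0) (α 0) ≤ U :=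
    hU (Set.mem_image_of_mem _ hdD)
  have e2 : (f ^ (M₁ - M₂)) • ((f ^ M₂) • α s₂) = (f ^ M₁) • α s₂ := by
    rw [smul_smul, ← zpow_add, Int.sub_add_cancel]
  have e3 : dist ((f ^ (M₁ - M₂)) • α 0) ((f ^ M₁) • α s₂) ≤ C := by
    rw [← e2, BAFT.dsmul hiso, dist_comm]
    exact hM₂
  calc dist (α s₁) (α s₂)
      = dist ((f ^ M₁) • α s₁) ((f ^ M₁) • α s₂) := (BAFT.dsmul hiso _ _ _).symm
    _ ≤ dist ((f ^ M₁) • α s₁) ((f ^ (M₁ - M₂)) • α 0)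
        + dist ((f ^ (M₁ - M₂)) • α 0) ((f ^ M₁) • α s₂) := dist_triangle _ _ _
    _ ≤ (dist ((f ^ M₁) • α s₁) (α 0) + dist (α 0) ((f ^ (M₁ - M₂)) • α 0)) + C := by
        have := dist_triangle ((f ^ M₁) • α s₁) (α 0) ((f ^ (M₁ - M₂)) • α 0)
        linarith [e3]
    _ ≤ C + (C + U) := by
        rw [dist_comm (α 0)]
        linarith


/-- The key geometric step of Lemma 6.8 of the paper: if the action of `G` on `X` is
metrically proper, `f` has a strongly contracting quasi-geodesic axis `A`, the orbit
`H·x₀` is `ν`-quasi-convex, and `⟨f⟩ ∩ gHg⁻¹ = {1}` for all `g`, then there is a uniform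
bound `B` on the distance between any two points of `A` lying within `K` of a coset
orbit `gH·x₀`. -/
theorem bounded_axis_fellow_traveling
    {G : Type*} [Group G] {X : Type*} [MetricSpace X] [MulAction G X]
    (hiso : ∀ g : G, Isometry (fun x : X => g • x)) (x₀ : X)
    -- the action is metrically proper
    (hproper : ∀ B : Set X, Bornology.IsBounded B →
      {g : G | ∃ x ∈ B, g • x ∈ B}.Finite)
    (H : Subgroup G) (ν : ℝ)
    -- the orbit H·x₀ is ν-quasi-convex
    (hqc : QuasiConvexSet ν ((fun h : G => h • x₀) '' (H : Set G)))
    (f : G) (α : ℝ → X) (A : Set X) (hA : A = Set.range α)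
    -- α is a bi-infinite (lamA, ca)-quasi-geodesic axis for f
    (lamA ca : ℝ) (hlamA : 1 ≤ lamA) (hca : 0 ≤ ca)
    (hαqg : ∀ s t : ℝ, |s - t| / lamA - ca ≤ dist (α s) (α t) ∧
      dist (α s) (α t) ≤ lamA * |s - t| + ca)
    (hinv : ∀ t : ℝ, f • α t ∈ A)
    -- A is strongly contracting with constants B', K
    (B' K : ℝ) (hK : 0 < K)
    (hcontr : ∀ (γ : ℝ → X) (n : ℝ), IsGeodesicOn γ 0 n →
      (∀ t ∈ Set.Icc (0:ℝ) n, K ≤ Metric.infDist (γ t) A) →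
      ∀ s ∈ Set.Icc (0:ℝ) n, ∀ t ∈ Set.Icc (0:ℝ) n, ∀ p ∈ A, ∀ q ∈ A,
        dist (γ s) p = Metric.infDist (γ s) A → dist (γ t) q = Metric.infDist (γ t) A →
          dist p q ≤ B')
    -- ⟨f⟩ meets every conjugate of H trivially
    (hfree : ∀ g : G, ∀ h ∈ H, ∀ n : ℤ, f ^ n = g * h * g⁻¹ → n = 0) :
    ∃ B : ℝ, ∀ g : G, ∀ x₁ ∈ A, ∀ x₂ ∈ A,
      (∃ h ∈ H, dist x₁ ((g * h) • x₀) ≤ K) → (∃ h ∈ H, dist x₂ ((g * h) • x₀) ≤ K) →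
        dist x₁ x₂ ≤ B :=
  BAFT_main hiso x₀ hproper H f α A hA lamA ca hlamA hca hαqg hinv K hfree
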